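/- Let h, c ∈ ℝ and let I ⊆ (0, ∞) be an open interval on which U² − h² > 0, U² + c > 0, and P(U) := U⁴ + (c − 1 − h²)·U² − h²·c > 0. Let R, Λ, Θ : I → ℝ be C² functions with R(U) = √(U² − h²), Λ'(U) = (U/(U² − h²))·√(P(U)), and Θ'(U) = (h/U²)·Λ'(U). Define X(U,t) = (R(U)·cos(t − Θ(U)), R(U)·sin(t − Θ(U)), Λ(U) + h·(t − Θ(U))). Then at every point of I × ℝ the Gaussian curvature of X equals 1/(U² + c)² and the fourth power of the angle function equals 1/(U² + c)²; hence K = n₃⁴, i.e., each helicoidal surface H^h_c is a K^{1/4}-translator. -/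

import Mathlib

open Real

set_option maxHeartbeats 2000000

noncomputable section

/-- Euclidean dot product on `ℝ³ = ℝ × ℝ × ℝ`. -/
def dot3 (v w : ℝ × ℝ × ℝ) : ℝ := v.1 * w.1 + v.2.1 * w.2.1 + v.2.2 * w.2.2

/-- Cross product on `ℝ³ = ℝ × ℝ × ℝ`. -/
def cross3 (v w : ℝ × ℝ × ℝ) : ℝ × ℝ × ℝ :=
  (v.2.1 * w.2.2 - v.2.2 * w.2.1,
   v.2.2 * w.1 - v.1 * w.2.2,
   v.1 * w.2.1 - v.2.1 * w.1)

/-- The vertical unit vector `e₃ = (0,0,1)`. -/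
def e3 : ℝ × ℝ × ℝ := ((0 : ℝ), (0 : ℝ), (1 : ℝ))

/-- Partial derivative of a parametrized surface w.r.t. the first parameter. -/
def pd1 (X : ℝ → ℝ → ℝ × ℝ × ℝ) (s t : ℝ) : ℝ × ℝ × ℝ := deriv (fun u => X u t) s

/-- Partial derivative of a parametrized surface w.r.t. the second parameter. -/
def pd2 (X : ℝ → ℝ → ℝ × ℝ × ℝ) (s t : ℝ) : ℝ × ℝ × ℝ := deriv (fun v => X s v) t

/-- Unit normal `n = (X_s × X_t)/‖X_s × X_t‖`. -/
def unitNormal (X : ℝ → ℝ → ℝ × ℝ × ℝ) (s t : ℝ) : ℝ × ℝ × ℝ :=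
  (Real.sqrt (dot3 (cross3 (pd1 X s t) (pd2 X s t)) (cross3 (pd1 X s t) (pd2 X s t))))⁻¹ •
    cross3 (pd1 X s t) (pd2 X s t)

/-- Angle function `n₃ = n · e₃`. -/
def angleFun (X : ℝ → ℝ → ℝ × ℝ × ℝ) (s t : ℝ) : ℝ := dot3 (unitNormal X s t) e3

/-- Gaussian curvature `K = ((X_ss·n)(X_tt·n) − (X_st·n)²)/(EG − F²)`. -/
def gauss (X : ℝ → ℝ → ℝ × ℝ × ℝ) (s t : ℝ) : ℝ :=
  (dot3 (pd1 (pd1 X) s t) (unitNormal X s t) * dot3 (pd2 (pd2 X) s t) (unitNormal X s t)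
      - (dot3 (pd2 (pd1 X) s t) (unitNormal X s t)) ^ 2)
    / (dot3 (pd1 X s t) (pd1 X s t) * dot3 (pd2 X s t) (pd2 X s t)
        - (dot3 (pd1 X s t) (pd2 X s t)) ^ 2)

lemma dot3_smul_right (v w : ℝ × ℝ × ℝ) (k : ℝ) : dot3 v (k • w) = k * dot3 v w := by
  simp [dot3, Prod.smul_def, smul_eq_mul]; ring

lemma dot3_smul_left (v w : ℝ × ℝ × ℝ) (k : ℝ) : dot3 (k • v) w = k * dot3 v w := by
  simp [dot3, Prod.smul_def, smul_eq_mul]; ring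

lemma key_alg (X : ℝ → ℝ → ℝ × ℝ × ℝ) (U t h c r q s o a1 a2 b1 b2 c1 c2 : ℝ)
    (hU0 : 0 < U) (hr0 : 0 < r) (hq0 : 0 < q) (hc0 : 0 < U^2 + c)
    (hr2 : r^2 = U^2 - h^2) (hq2 : q^2 = U^4 + (c - 1 - h^2)*U^2 - h^2*c)
    (hso : s^2 + o^2 = 1)
    (ha1 : a1 = U / r) (ha2 : a2 = -(h^2) / r^3)
    (hb1 : b1 = U * q / r^2)
    (hb2 : b2 = (U*(4*U^3 + 2*(c-1-h^2)*U)*r^2 - 2*(U^2+h^2)*q^2) / (2*r^4*q))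
    (hc1 : c1 = h*q/(U*r^2)) (hc2 : c2 = h/U^2*b2 - 2*h*b1/U^3)
    (hXs : pd1 X U t = (a1*o + r*c1*s, a1*s - r*c1*o, b1 - h*c1))
    (hXt : pd2 X U t = (-(r*s), r*o, h))
    (hXss : pd1 (pd1 X) U t =
      ((a2 - r*c1^2)*o + (2*a1*c1 + r*c2)*s, (a2 - r*c1^2)*s - (2*a1*c1 + r*c2)*o, b2 - h*c2))
    (hXst : pd2 (pd1 X) U t = (-(a1*s) + r*c1*o, a1*o + r*c1*s, 0))
    (hXtt : pd2 (pd2 X) U t = (-(r*o), -(r*s), 0)) :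
    gauss X U t = 1/(U^2+c)^2 ∧ (angleFun X U t)^4 = 1/(U^2+c)^2 ∧
      gauss X U t = (angleFun X U t)^4 := by
  have hrne : r ≠ 0 := hr0.ne'
  have hqne : q ≠ 0 := hq0.ne'
  have hUne : U ≠ 0 := hU0.ne'
  set w := Real.sqrt (U^2 + c) with hwdef
  have hw2 : w^2 = U^2 + c := Real.sq_sqrt hc0.le
  have hw0 : 0 < w := Real.sqrt_pos.mpr hc0
  have hwne : w ≠ 0 := hw0.ne'
  have har : r * a1 = U := by rw [ha1]; field_simp
  have hNT : cross3 ((a1*o + r*c1*s, a1*s - r*c1*o, b1 - h*c1) : ℝ × ℝ × ℝ) (-(r*s), r*o, h)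
      = (h*a1*s - r*b1*o, -(r*b1*s) - h*a1*o, U) := by
    simp only [cross3]
    exact Prod.ext (by ring) (Prod.ext (by ring) (by linear_combination har + r*a1*hso))
  have hN : cross3 (pd1 X U t) (pd2 X U t) = (h*a1*s - r*b1*o, -(r*b1*s) - h*a1*o, U) := by
    rw [hXs, hXt]; exact hNT
  have h1 : h^2*a1^2 + r^2*b1^2 = U^2*(U^2+c) - U^2 := by
    rw [ha1, hb1]; field_simp; linear_combination hq2 - (U^2+c-1)*hr2
  have hNN : dot3 ((h*a1*s - r*b1*o, -(r*b1*s) - h*a1*o, U) : ℝ × ℝ × ℝ)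
      (h*a1*s - r*b1*o, -(r*b1*s) - h*a1*o, U) = U^2*(U^2+c) := by
    simp only [dot3]; linear_combination (h^2*a1^2 + r^2*b1^2)*hso + h1
  have hun : unitNormal X U t = (U*w)⁻¹ • ((h*a1*s - r*b1*o, -(r*b1*s) - h*a1*o, U) : ℝ × ℝ × ℝ) := by
    unfold unitNormal
    rw [hN, hNN, show U^2*(U^2+c) = (U*w)^2 by rw [mul_pow, hw2],
      Real.sqrt_sq (by positivity)]
  have hangle : angleFun X U t = w⁻¹ := by
    unfold angleFun
    rw [hun, dot3_smul_left]
    simp only [dot3, e3]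
    field_simp; ring
  have hang4 : (angleFun X U t)^4 = 1/(U^2+c)^2 := by
    rw [hangle, ← hw2]; field_simp
  have hrb : r^2*b1 = U*q := by rw [hb1]; field_simp
  have hNt : dot3 ((-(r*o), -(r*s), 0) : ℝ × ℝ × ℝ) (h*a1*s - r*b1*o, -(r*b1*s) - h*a1*o, U)
      = U*q := by
    simp only [dot3]; linear_combination r^2*b1*hso + hrb
  have hM1 : h*a1^2 + r^2*c1*b1 = h*(U^2+c) := by
    rw [ha1, hc1, hb1]; field_simp; linear_combination h*hq2 - h*(U^2+c)*hr2
  have hM : dot3 ((-(a1*s) + r*c1*o, a1*o + r*c1*s, 0) : ℝ × ℝ × ℝ)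
      (h*a1*s - r*b1*o, -(r*b1*s) - h*a1*o, U) = -(h*(U^2+c)) := by
    simp only [dot3]; linear_combination (-(h*a1^2 + r^2*c1*b1))*hso - hM1
  have hT1 : a2*(r*b1) = -(h^2*U*q)/r^4 := by rw [ha2, hb1]; field_simp
  have hT2 : (r^2*c1^2)*b1 = h^2*q^3/(U*r^4) := by rw [hc1, hb1]; field_simp
  have hT3 : 2*h*a1^2*c1 = 2*h^2*U*q/r^4 := by rw [ha1, hc1]; field_simp
  have hstep2 : -(-(h^2*U*q)/r^4) + h^2*q^3/(U*r^4) + 2*h^2*U*q/r^4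
      + U*((U*(4*U^3 + 2*(c-1-h^2)*U)*r^2 - 2*(U^2+h^2)*q^2)/(2*r^4*q))
      = (U^4 + h^2*(U^2+c)^2)/(U*q) := by
    field_simp; rw [show r^4 = (r^2)^2 by ring, hr2, hq2]; ring
  have hstep : -(a2*(r*b1)) + (r^2*c1^2)*b1 + 2*h*a1^2*c1 + U*b2
      = (U^4 + h^2*(U^2+c)^2)/(U*q) := by
    rw [hT1, hT2, hT3, hb2]; exact hstep2
  have hLB : -((a2 - r*c1^2)*(r*b1)) + (2*a1*c1 + r*c2)*(h*a1) + (b2 - h*c2)*U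
      = (U^4 + h^2*(U^2+c)^2)/(U*q) := by
    linear_combination hstep + h*c2*har
  have hL : dot3 (((a2 - r*c1^2)*o + (2*a1*c1 + r*c2)*s, (a2 - r*c1^2)*s - (2*a1*c1 + r*c2)*o,
      b2 - h*c2) : ℝ × ℝ × ℝ) (h*a1*s - r*b1*o, -(r*b1*s) - h*a1*o, U)
      = (U^4 + h^2*(U^2+c)^2)/(U*q) := by
    rw [← hLB]; simp only [dot3]
    linear_combination (-((a2 - r*c1^2)*(r*b1)) + (2*a1*c1 + r*c2)*(h*a1))*hso
  have hEGF2 : dot3 ((a1*o + r*c1*s, a1*s - r*c1*o, b1 - h*c1) : ℝ × ℝ × ℝ)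
        (a1*o + r*c1*s, a1*s - r*c1*o, b1 - h*c1)
      * dot3 ((-(r*s), r*o, h) : ℝ × ℝ × ℝ) (-(r*s), r*o, h)
      - (dot3 ((a1*o + r*c1*s, a1*s - r*c1*o, b1 - h*c1) : ℝ × ℝ × ℝ) (-(r*s), r*o, h))^2
      = U^2*(U^2+c) := by
    have hlag : dot3 ((a1*o + r*c1*s, a1*s - r*c1*o, b1 - h*c1) : ℝ × ℝ × ℝ)
          (a1*o + r*c1*s, a1*s - r*c1*o, b1 - h*c1)
        * dot3 ((-(r*s), r*o, h) : ℝ × ℝ × ℝ) (-(r*s), r*o, h)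
        - (dot3 ((a1*o + r*c1*s, a1*s - r*c1*o, b1 - h*c1) : ℝ × ℝ × ℝ) (-(r*s), r*o, h))^2
        = dot3 (cross3 ((a1*o + r*c1*s, a1*s - r*c1*o, b1 - h*c1) : ℝ × ℝ × ℝ) (-(r*s), r*o, h))
            (cross3 ((a1*o + r*c1*s, a1*s - r*c1*o, b1 - h*c1) : ℝ × ℝ × ℝ) (-(r*s), r*o, h)) := by
      simp only [dot3, cross3]; ring
    rw [hlag, hNT, hNN]
  have hgauss : gauss X U t = 1/(U^2+c)^2 := by
    unfold gauss
    rw [hXss, hXtt, hXst, hXs, hXt, hun]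
    rw [dot3_smul_right, dot3_smul_right, dot3_smul_right, hL, hNt, hM, hEGF2]
    rw [← hw2]; field_simp; ring
  exact ⟨hgauss, hang4, hgauss.trans hang4.symm⟩

/-- On the helicoidal patch `H^h_c` the Gaussian curvature equals
`1/(U² + c)²` and the fourth power of the angle function equals `1/(U² + c)²`; hence
`K = n₃⁴`, i.e. each `H^h_c` is a `K^{1/4}`-translator. -/
theorem helicoidal_translator
    (h c : ℝ) (I : Set ℝ) (hIopen : IsOpen I) (hIconn : I.OrdConnected)
    (hIpos : I ⊆ Set.Ioi (0 : ℝ))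
    (hUh : ∀ U ∈ I, 0 < U ^ 2 - h ^ 2)
    (hUc : ∀ U ∈ I, 0 < U ^ 2 + c)
    (hP : ∀ U ∈ I, 0 < U ^ 4 + (c - 1 - h ^ 2) * U ^ 2 - h ^ 2 * c)
    (R Λ Θ : ℝ → ℝ)
    (hRC : ContDiffOn ℝ 2 R I) (hΛC : ContDiffOn ℝ 2 Λ I) (hΘC : ContDiffOn ℝ 2 Θ I)
    (hR : ∀ U ∈ I, R U = Real.sqrt (U ^ 2 - h ^ 2))
    (hΛ' : ∀ U ∈ I, deriv Λ U =
      (U / (U ^ 2 - h ^ 2)) * Real.sqrt (U ^ 4 + (c - 1 - h ^ 2) * U ^ 2 - h ^ 2 * c))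
    (hΘ' : ∀ U ∈ I, deriv Θ U = (h / U ^ 2) * deriv Λ U)
    (X : ℝ → ℝ → ℝ × ℝ × ℝ)
    (hX : ∀ U t, X U t =
      (R U * Real.cos (t - Θ U), R U * Real.sin (t - Θ U), Λ U + h * (t - Θ U))) :
    ∀ U ∈ I, ∀ t : ℝ,
      gauss X U t = 1 / (U ^ 2 + c) ^ 2 ∧
      (angleFun X U t) ^ 4 = 1 / (U ^ 2 + c) ^ 2 ∧
      gauss X U t = (angleFun X U t) ^ 4 := by
  -- derivative of Λ
  have hΛd : ∀ u ∈ I, HasDerivAt Λ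
      (u / (u ^ 2 - h ^ 2) * Real.sqrt (u ^ 4 + (c - 1 - h ^ 2) * u ^ 2 - h ^ 2 * c)) u := by
    intro u hu
    have := ((hΛC.differentiableOn two_ne_zero).differentiableAt (hIopen.mem_nhds hu)).hasDerivAt
    rwa [hΛ' u hu] at this
  have hΘd : ∀ u ∈ I, HasDerivAt Θ
      (h / u ^ 2 * (u / (u ^ 2 - h ^ 2) * Real.sqrt (u ^ 4 + (c - 1 - h ^ 2) * u ^ 2 - h ^ 2 * c))) u := by
    intro u hu
    have := ((hΘC.differentiableOn two_ne_zero).differentiableAt (hIopen.mem_nhds hu)).hasDerivAt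
    rwa [hΘ' u hu, hΛ' u hu] at this
  -- derivative of sqrt (u^2 - h^2)
  have hsq : ∀ u ∈ I, HasDerivAt (fun x : ℝ => Real.sqrt (x ^ 2 - h ^ 2))
      (u / Real.sqrt (u ^ 2 - h ^ 2)) u := by
    intro u hu
    have h1 : HasDerivAt (fun x : ℝ => x ^ 2 - h ^ 2) (2 * u) u := by
      simpa using (hasDerivAt_pow 2 u).sub_const (h ^ 2)
    have h2 := h1.sqrt (ne_of_gt (hUh u hu))
    have h3 : 2 * u / (2 * Real.sqrt (u ^ 2 - h ^ 2)) = u / Real.sqrt (u ^ 2 - h ^ 2) :=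
      mul_div_mul_left _ _ two_ne_zero
    rwa [h3] at h2
  have hRd : ∀ u ∈ I, HasDerivAt R (u / Real.sqrt (u ^ 2 - h ^ 2)) u := fun u hu =>
    (hsq u hu).congr_of_eventuallyEq
      (Filter.eventuallyEq_of_mem (hIopen.mem_nhds hu) fun x hx => hR x hx)
  -- first partial in u
  have hXsAll : ∀ u ∈ I, ∀ t' : ℝ, pd1 X u t' =
      (u / Real.sqrt (u ^ 2 - h ^ 2) * Real.cos (t' - Θ u) +
        Real.sqrt (u ^ 2 - h ^ 2) *
          (h / u ^ 2 * (u / (u ^ 2 - h ^ 2) * Real.sqrt (u ^ 4 + (c - 1 - h ^ 2) * u ^ 2 - h ^ 2 * c))) *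
          Real.sin (t' - Θ u),
       u / Real.sqrt (u ^ 2 - h ^ 2) * Real.sin (t' - Θ u) -
        Real.sqrt (u ^ 2 - h ^ 2) *
          (h / u ^ 2 * (u / (u ^ 2 - h ^ 2) * Real.sqrt (u ^ 4 + (c - 1 - h ^ 2) * u ^ 2 - h ^ 2 * c))) *
          Real.cos (t' - Θ u),
       u / (u ^ 2 - h ^ 2) * Real.sqrt (u ^ 4 + (c - 1 - h ^ 2) * u ^ 2 - h ^ 2 * c) -
        h * (h / u ^ 2 * (u / (u ^ 2 - h ^ 2) * Real.sqrt (u ^ 4 + (c - 1 - h ^ 2) * u ^ 2 - h ^ 2 * c)))) := by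
    intro u hu t'
    have hcos := ((hΘd u hu).const_sub t').cos
    have hsin := ((hΘd u hu).const_sub t').sin
    have c1 := (hRd u hu).mul hcos
    have c2 := (hRd u hu).mul hsin
    have c3 := (hΛd u hu).add (((hΘd u hu).const_sub t').const_mul h)
    have hfun : (fun u' => X u' t') = fun u' =>
        ((R u' * Real.cos (t' - Θ u'), R u' * Real.sin (t' - Θ u'), Λ u' + h * (t' - Θ u')) : ℝ × ℝ × ℝ) :=
      funext fun u' => hX u' t'
    have hder := (c1.prodMk (c2.prodMk c3)).congr_of_eventuallyEq (Filter.EventuallyEq.of_eq hfun)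
    have : pd1 X u t' = _ := hder.deriv
    rw [this]
    refine Prod.ext ?_ (Prod.ext ?_ ?_) <;> simp only <;> (try rw [hR u hu]) <;> ring

  -- first partial in t
  have hXtAll : ∀ u t' : ℝ, pd2 X u t' =
      (-(R u * Real.sin (t' - Θ u)), R u * Real.cos (t' - Θ u), h) := by
    intro u t'
    have hid : HasDerivAt (fun v : ℝ => v - Θ u) 1 t' := (hasDerivAt_id t').sub_const (Θ u)
    have c1 := hid.cos.const_mul (R u)
    have c2 := hid.sin.const_mul (R u)
    have c3 := (hid.const_mul h).const_add (Λ u)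
    have hfun : (fun v => X u v) = fun v =>
        ((R u * Real.cos (v - Θ u), R u * Real.sin (v - Θ u), Λ u + h * (v - Θ u)) : ℝ × ℝ × ℝ) :=
      funext fun v => hX u v
    have hder := (c1.prodMk (c2.prodMk c3)).congr_of_eventuallyEq (Filter.EventuallyEq.of_eq hfun)
    have : pd2 X u t' = _ := hder.deriv
    rw [this]
    refine Prod.ext ?_ (Prod.ext ?_ ?_) <;> simp only <;> ring
  -- second partial in t,t
  have hXttAll : ∀ u t' : ℝ, pd2 (pd2 X) u t' =
      (-(R u * Real.cos (t' - Θ u)), -(R u * Real.sin (t' - Θ u)), 0) := by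
    intro u t'
    have hid : HasDerivAt (fun v : ℝ => v - Θ u) 1 t' := (hasDerivAt_id t').sub_const (Θ u)
    have c1 := (hid.sin.const_mul (R u)).neg
    have c2 := hid.cos.const_mul (R u)
    have c3 : HasDerivAt (fun _ : ℝ => h) 0 t' := hasDerivAt_const t' h
    have hfun : (fun v => pd2 X u v) = fun v =>
        ((-(R u * Real.sin (v - Θ u)), R u * Real.cos (v - Θ u), h) : ℝ × ℝ × ℝ) :=
      funext fun v => hXtAll u v
    have hder := (c1.prodMk (c2.prodMk c3)).congr_of_eventuallyEq (Filter.EventuallyEq.of_eq hfun)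
    have : pd2 (pd2 X) u t' = _ := hder.deriv
    rw [this]
    refine Prod.ext ?_ (Prod.ext ?_ ?_) <;> simp only <;> ring
  -- mixed second partial
  have hXstAll : ∀ u ∈ I, ∀ t' : ℝ, pd2 (pd1 X) u t' =
      (-(u / Real.sqrt (u ^ 2 - h ^ 2) * Real.sin (t' - Θ u)) +
        Real.sqrt (u ^ 2 - h ^ 2) *
          (h / u ^ 2 * (u / (u ^ 2 - h ^ 2) * Real.sqrt (u ^ 4 + (c - 1 - h ^ 2) * u ^ 2 - h ^ 2 * c))) *
          Real.cos (t' - Θ u),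
       u / Real.sqrt (u ^ 2 - h ^ 2) * Real.cos (t' - Θ u) +
        Real.sqrt (u ^ 2 - h ^ 2) *
          (h / u ^ 2 * (u / (u ^ 2 - h ^ 2) * Real.sqrt (u ^ 4 + (c - 1 - h ^ 2) * u ^ 2 - h ^ 2 * c))) *
          Real.sin (t' - Θ u),
       0) := by
    intro u hu t'
    have hid : HasDerivAt (fun v : ℝ => v - Θ u) 1 t' := (hasDerivAt_id t').sub_const (Θ u)
    have c1 := (hid.cos.const_mul (u / Real.sqrt (u ^ 2 - h ^ 2))).add
      (hid.sin.const_mul (Real.sqrt (u ^ 2 - h ^ 2) *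
        (h / u ^ 2 * (u / (u ^ 2 - h ^ 2) * Real.sqrt (u ^ 4 + (c - 1 - h ^ 2) * u ^ 2 - h ^ 2 * c)))))
    have c2 := (hid.sin.const_mul (u / Real.sqrt (u ^ 2 - h ^ 2))).sub
      (hid.cos.const_mul (Real.sqrt (u ^ 2 - h ^ 2) *
        (h / u ^ 2 * (u / (u ^ 2 - h ^ 2) * Real.sqrt (u ^ 4 + (c - 1 - h ^ 2) * u ^ 2 - h ^ 2 * c)))))
    have c3 : HasDerivAt (fun _ : ℝ =>
        u / (u ^ 2 - h ^ 2) * Real.sqrt (u ^ 4 + (c - 1 - h ^ 2) * u ^ 2 - h ^ 2 * c) -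
        h * (h / u ^ 2 * (u / (u ^ 2 - h ^ 2) * Real.sqrt (u ^ 4 + (c - 1 - h ^ 2) * u ^ 2 - h ^ 2 * c))))
        0 t' := hasDerivAt_const t' _
    have hfun : (fun v => pd1 X u v) = fun v =>
        ((u / Real.sqrt (u ^ 2 - h ^ 2) * Real.cos (v - Θ u) +
          Real.sqrt (u ^ 2 - h ^ 2) *
            (h / u ^ 2 * (u / (u ^ 2 - h ^ 2) * Real.sqrt (u ^ 4 + (c - 1 - h ^ 2) * u ^ 2 - h ^ 2 * c))) *
            Real.sin (v - Θ u),
         u / Real.sqrt (u ^ 2 - h ^ 2) * Real.sin (v - Θ u) -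
          Real.sqrt (u ^ 2 - h ^ 2) *
            (h / u ^ 2 * (u / (u ^ 2 - h ^ 2) * Real.sqrt (u ^ 4 + (c - 1 - h ^ 2) * u ^ 2 - h ^ 2 * c))) *
            Real.cos (v - Θ u),
         u / (u ^ 2 - h ^ 2) * Real.sqrt (u ^ 4 + (c - 1 - h ^ 2) * u ^ 2 - h ^ 2 * c) -
          h * (h / u ^ 2 * (u / (u ^ 2 - h ^ 2) * Real.sqrt (u ^ 4 + (c - 1 - h ^ 2) * u ^ 2 - h ^ 2 * c)))) :
          ℝ × ℝ × ℝ) :=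
      funext fun v => hXsAll u hu v
    have hder := (c1.prodMk (c2.prodMk c3)).congr_of_eventuallyEq (Filter.EventuallyEq.of_eq hfun)
    have : pd2 (pd1 X) u t' = _ := hder.deriv
    rw [this]
    refine Prod.ext ?_ (Prod.ext ?_ ?_) <;> simp only <;> ring

  -- per-point computation
  intro U hU t
  have hU0 : 0 < U := hIpos hU
  have hx2 : 0 < U ^ 2 - h ^ 2 := hUh U hU
  have hP0 : 0 < U ^ 4 + (c - 1 - h ^ 2) * U ^ 2 - h ^ 2 * c := hP U hU
  set r := Real.sqrt (U ^ 2 - h ^ 2) with hrdef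
  set q := Real.sqrt (U ^ 4 + (c - 1 - h ^ 2) * U ^ 2 - h ^ 2 * c) with hqdef
  set s := Real.sin (t - Θ U) with hsdef
  set o := Real.cos (t - Θ U) with hodef
  have hr0 : 0 < r := Real.sqrt_pos.mpr hx2
  have hq0 : 0 < q := Real.sqrt_pos.mpr hP0
  have hr2 : r ^ 2 = U ^ 2 - h ^ 2 := Real.sq_sqrt hx2.le
  have hq2 : q ^ 2 = U ^ 4 + (c - 1 - h ^ 2) * U ^ 2 - h ^ 2 * c := Real.sq_sqrt hP0.le
  have hso : s ^ 2 + o ^ 2 = 1 := by rw [hsdef, hodef]; exact Real.sin_sq_add_cos_sq _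
  -- conversions of first partials
  have hXsU : pd1 X U t = (U/r*o + r*(h*q/(U*r^2))*s, U/r*s - r*(h*q/(U*r^2))*o,
      U*q/r^2 - h*(h*q/(U*r^2))) := by
    rw [hXsAll U hU t]
    refine Prod.ext ?_ (Prod.ext ?_ ?_)
    · simp only; simp only [← hqdef, ← hrdef, ← hsdef, ← hodef]
      field_simp
      linear_combination h*q*s*hr2
    · simp only; simp only [← hqdef, ← hrdef, ← hsdef, ← hodef]
      field_simp
      linear_combination -h*q*o*hr2
    · simp only; simp only [← hqdef, ← hrdef, ← hsdef, ← hodef]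
      field_simp
      linear_combination hr2
  have hXtU : pd2 X U t = (-(r*s), r*o, h) := by
    rw [hXtAll U t, hR U hU]
  have hXttU : pd2 (pd2 X) U t = (-(r*o), -(r*s), 0) := by
    rw [hXttAll U t, hR U hU]
  have hXstU : pd2 (pd1 X) U t = (-(U/r*s) + r*(h*q/(U*r^2))*o, U/r*o + r*(h*q/(U*r^2))*s, 0) := by
    rw [hXstAll U hU t]
    refine Prod.ext ?_ (Prod.ext ?_ ?_)
    · simp only; simp only [← hqdef, ← hrdef, ← hsdef, ← hodef]
      field_simp
      linear_combination h*q*o*hr2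
    · simp only; simp only [← hqdef, ← hrdef, ← hsdef, ← hodef]
      field_simp
      linear_combination h*q*s*hr2
    · rfl
  -- second derivative in u at U
  have hPd : HasDerivAt (fun x : ℝ => x ^ 4 + (c - 1 - h ^ 2) * x ^ 2 - h ^ 2 * c)
      (4*U^3 + (c-1-h^2)*(2*U)) U := by
    have := ((hasDerivAt_pow 4 U).add ((hasDerivAt_pow 2 U).const_mul (c-1-h^2))).sub_const (h^2*c)
    refine this.congr_deriv ?_
    push_cast
    ring
  have hqd := hPd.sqrt (ne_of_gt hP0)
  have hd2 : HasDerivAt (fun x : ℝ => x ^ 2 - h ^ 2) (2*U) U := by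
    simpa using (hasDerivAt_pow 2 U).sub_const (h ^ 2)
  have hfr : HasDerivAt (fun x : ℝ => x / (x ^ 2 - h ^ 2)) _ U :=
    (hasDerivAt_id U).div hd2 (ne_of_gt hx2)
  have hlfd := hfr.mul hqd
  have hpow2 : HasDerivAt (fun x : ℝ => x ^ 2) (2*U) U := by
    simpa using hasDerivAt_pow 2 U
  have hinv : HasDerivAt (fun x : ℝ => h / x ^ 2) _ U :=
    (hasDerivAt_const U h).div hpow2 (by positivity)
  have hθfd := hinv.mul hlfd
  have hsqU := hsq U hU
  have ha2d : HasDerivAt (fun x : ℝ => x / Real.sqrt (x ^ 2 - h ^ 2)) _ U :=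
    (hasDerivAt_id U).div hsqU (by rw [← hrdef]; exact hr0.ne')
  have hΘU := hΘd U hU
  have hcosU := (hΘU.const_sub t).cos
  have hsinU := (hΘU.const_sub t).sin
  have hB := hsqU.mul hθfd
  have d1 := (ha2d.mul hcosU).add (hB.mul hsinU)
  have d2 := (ha2d.mul hsinU).sub (hB.mul hcosU)
  have d3 := hlfd.sub (hθfd.const_mul h)
  have hev : (fun u => pd1 X u t) =ᶠ[nhds U] (fun u =>
      ((u / Real.sqrt (u ^ 2 - h ^ 2) * Real.cos (t - Θ u) +
        Real.sqrt (u ^ 2 - h ^ 2) *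
          (h / u ^ 2 * (u / (u ^ 2 - h ^ 2) * Real.sqrt (u ^ 4 + (c - 1 - h ^ 2) * u ^ 2 - h ^ 2 * c))) *
          Real.sin (t - Θ u),
       u / Real.sqrt (u ^ 2 - h ^ 2) * Real.sin (t - Θ u) -
        Real.sqrt (u ^ 2 - h ^ 2) *
          (h / u ^ 2 * (u / (u ^ 2 - h ^ 2) * Real.sqrt (u ^ 4 + (c - 1 - h ^ 2) * u ^ 2 - h ^ 2 * c))) *
          Real.cos (t - Θ u),
       u / (u ^ 2 - h ^ 2) * Real.sqrt (u ^ 4 + (c - 1 - h ^ 2) * u ^ 2 - h ^ 2 * c) -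
        h * (h / u ^ 2 * (u / (u ^ 2 - h ^ 2) * Real.sqrt (u ^ 4 + (c - 1 - h ^ 2) * u ^ 2 - h ^ 2 * c)))) :
        ℝ × ℝ × ℝ)) :=
    Filter.eventuallyEq_of_mem (hIopen.mem_nhds hU) fun u hu => hXsAll u hu t
  have hder := ((d1.prodMk (d2.prodMk d3))).congr_of_eventuallyEq hev
  have hXssU0 : pd1 (pd1 X) U t = _ := hder.deriv
  have hXssU : pd1 (pd1 X) U t =
      ((-(h^2)/r^3 - r*(h*q/(U*r^2))^2)*o
        + (2*(U/r)*(h*q/(U*r^2)) + r*(h/U^2*((U*(4*U^3 + 2*(c-1-h^2)*U)*r^2 - 2*(U^2+h^2)*q^2)/(2*r^4*q)) - 2*h*(U*q/r^2)/U^3))*s,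
       (-(h^2)/r^3 - r*(h*q/(U*r^2))^2)*s
        - (2*(U/r)*(h*q/(U*r^2)) + r*(h/U^2*((U*(4*U^3 + 2*(c-1-h^2)*U)*r^2 - 2*(U^2+h^2)*q^2)/(2*r^4*q)) - 2*h*(U*q/r^2)/U^3))*o,
       (U*(4*U^3 + 2*(c-1-h^2)*U)*r^2 - 2*(U^2+h^2)*q^2)/(2*r^4*q)
        - h*(h/U^2*((U*(4*U^3 + 2*(c-1-h^2)*U)*r^2 - 2*(U^2+h^2)*q^2)/(2*r^4*q)) - 2*h*(U*q/r^2)/U^3)) := by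
    rw [hXssU0]
    refine Prod.ext ?_ (Prod.ext ?_ ?_)
    · simp only [Pi.mul_apply, id_eq]; simp only [← hqdef, ← hrdef, ← hsdef, ← hodef]
      field_simp
      rw [hr2]; ring
    · simp only [Pi.mul_apply, id_eq]; simp only [← hqdef, ← hrdef, ← hsdef, ← hodef]
      field_simp
      rw [hr2]; ring
    · simp only [Pi.mul_apply, id_eq]; simp only [← hqdef, ← hrdef, ← hsdef, ← hodef]
      field_simp
      rw [show r^4 = (r^2)^2 by ring, hr2]; ring
  exact key_alg X U t h c r q s o (U/r) (-(h^2)/r^3) (U*q/r^2)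
      ((U*(4*U^3 + 2*(c-1-h^2)*U)*r^2 - 2*(U^2+h^2)*q^2)/(2*r^4*q)) (h*q/(U*r^2))
      (h/U^2*((U*(4*U^3 + 2*(c-1-h^2)*U)*r^2 - 2*(U^2+h^2)*q^2)/(2*r^4*q)) - 2*h*(U*q/r^2)/U^3)
      hU0 hr0 hq0 (hUc U hU) hr2 hq2 hso rfl rfl rfl rfl rfl rfl hXsU hXtU hXssU hXstU hXttU
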